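/- Let G be a topological group with points g_n ∈ G \ {0} and open neighbourhoods V_n of 0 (n ∈ ℕ, with V_{-1} = G) satisfying: for all n, 0 ∉ g_n + V_n + V_n ⊆ V_{n-1} and V_n ⊆ V_{n-1}. Then for every strictly increasing finite sequence i_1 < i_2 < ... < i_k of natural numbers, (g_{i_1} + V_{i_1}) + (g_{i_2} + V_{i_2}) + ... + (g_{i_k} + V_{i_k}) + V_{i_k} ⊆ g_{i_1} + V_{i_1} + V_{i_1}. -/

import Mathlib

open Pointwise

/-- Given `g n ≠ 0` and open neighbourhoods `V n` of `0` with
`0 ∉ g n + V n + V n ⊆ V (n-1)` and `V n ⊆ V (n-1)` (with `V_{-1} = G`),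
for every strictly increasing finite sequence `i₁ < ⋯ < i_k` we have
`(g i₁ + V i₁) + ⋯ + (g i_k + V i_k) + V i_k ⊆ g i₁ + V i₁ + V i₁`. -/
theorem sum_subset_of_gn_Vn {G : Type*} [AddGroup G] [TopologicalSpace G]
    [IsTopologicalAddGroup G] [T2Space G]
    (g : ℕ → G) (V : ℕ → Set G)
    (hg : ∀ n, g n ≠ 0)
    (hV : ∀ n, IsOpen (V n) ∧ (0 : G) ∈ V n)
    (h0 : ∀ n, (0 : G) ∉ {g n} + V n + V n)
    (hsub : ∀ n, {g (n + 1)} + V (n + 1) + V (n + 1) ⊆ V n)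
    (hmono : ∀ n, V (n + 1) ⊆ V n) :
    ∀ (k : ℕ) (i : Fin (k + 1) → ℕ), StrictMono i →
      (List.ofFn fun j : Fin (k + 1) => {g (i j)} + V (i j)).sum + V (i (Fin.last k)) ⊆
        {g (i 0)} + V (i 0) + V (i 0) := by
  have hanti : Antitone V := antitone_nat_of_succ_le hmono
  have key : ∀ m n : ℕ, m < n → {g n} + V n + V n ⊆ V m := by
    intro m n hmn
    obtain ⟨p, rfl⟩ := Nat.exists_eq_succ_of_ne_zero (by omega : n ≠ 0)
    exact (hsub p).trans (hanti (Nat.lt_succ_iff.mp hmn))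
  intro k
  induction k with
  | zero =>
    intro i hi
    simp [List.ofFn_succ, Fin.last]
  | succ k ih =>
    intro i hi
    have hi' : StrictMono (fun j : Fin (k + 1) => i j.succ) :=
      fun a b h => hi (Fin.succ_lt_succ_iff.mpr h)
    have h1 := ih _ hi'
    have h2 : {g (i 1)} + V (i 1) + V (i 1) ⊆ V (i 0) :=
      key _ _ (hi (by exact Fin.zero_lt_one))
    rw [List.ofFn_succ, List.sum_cons, add_assoc]
    have hlast : i (Fin.last (k + 1)) = i ((Fin.last k).succ) := by rw [Fin.succ_last]
    rw [hlast]
    have h3 : (List.ofFn fun j : Fin (k + 1) => {g (i j.succ)} + V (i j.succ)).sum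
        + V (i (Fin.last k).succ) ⊆ V (i 0) := by
      refine Set.Subset.trans ?_ h2
      simpa using h1
    refine (Set.add_subset_add Set.Subset.rfl h3).trans ?_
    simp [Fin.succ_zero_eq_one]
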